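/- arXiv:1107.3847 — 4 statements merged into one kernel-verified Lean document; each statement's English description precedes it below -/
import Mathlib

section
/- Let n ≥ 1, let V = ℝ^{2n+1} with standard basis e₁,…,e₂ₙ,e₂ₙ₊₁, and let V' ⊆ V be the span of e₁,…,e₂ₙ. Let 𝔤 be the subspace of (2n+1)×(2n+1) real matrices of block form [[A, b],[0, c]] where the top-left 2n×2n block A is skew-symmetric, b ∈ ℝ^{2n} is an arbitrary column, and c ∈ ℝ (equivalently: M i j = −M j i for all i,j ≤ 2n, and the last row of M vanishes except possibly in its last entry). Then an alternating bilinear map T : V × V → V lies in the image of the map 𝒜, i.e. T(u,w) = S(u)w − S(w)u for some linear S : V → 𝔤, if and only if the last coordinate of T(u,w) vanishes for all u, w ∈ V'. -/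
open Matrix

/-- The Lie algebra `𝔤` of the structure group of a sub-Riemannian structure:
`(2n+1)×(2n+1)` real matrices of block form `[[A, b], [0, c]]` with the top-left
`2n×2n` block `A` skew-symmetric, `b ∈ ℝ^{2n}` arbitrary and `c ∈ ℝ`;
equivalently `M i j = - M j i` for `i, j < 2n` and the last row vanishes except
possibly at the last entry. -/
def memSubRiemannAlg (n : ℕ) (M : Matrix (Fin (2 * n + 1)) (Fin (2 * n + 1)) ℝ) : Prop :=
  (∀ i j : Fin (2 * n + 1), (i : ℕ) < 2 * n → (j : ℕ) < 2 * n → M i j = - M j i) ∧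
  (∀ j : Fin (2 * n + 1), (j : ℕ) < 2 * n → M (Fin.last (2 * n)) j = 0)

private lemma fin_lt_or_last {n : ℕ} (j : Fin (2 * n + 1)) :
    (j : ℕ) < 2 * n ∨ j = Fin.last (2 * n) := by
  rcases Nat.lt_succ_iff_lt_or_eq.mp j.isLt with h | h
  · exact Or.inl h
  · exact Or.inr (Fin.ext (by simpa using h))

/-- Projection of `ℝ^{2n+1}` onto the span of the first `2n` coordinates. -/
noncomputable def projLast (n : ℕ) : (Fin (2 * n + 1) → ℝ) →ₗ[ℝ] (Fin (2 * n + 1) → ℝ) where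
  toFun u := fun i => if (i : ℕ) < 2 * n then u i else 0
  map_add' u v := by funext i; by_cases h : (i : ℕ) < 2 * n <;> simp [h]
  map_smul' c u := by funext i; by_cases h : (i : ℕ) < 2 * n <;> simp [h]

private lemma projLast_single_lt {n : ℕ} {l : Fin (2 * n + 1)} (hl : (l : ℕ) < 2 * n) :
    projLast n (Pi.single l (1 : ℝ)) = Pi.single l 1 := by
  funext i
  by_cases h : (i : ℕ) < 2 * n
  · simp [projLast, h]
  · have hne : i ≠ l := Fin.ne_of_val_ne (by omega)
    simp [projLast, h, Pi.single_eq_of_ne hne]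

private lemma projLast_single_last {n : ℕ} :
    projLast n (Pi.single (Fin.last (2 * n)) (1 : ℝ)) = 0 := by
  funext i
  by_cases h : (i : ℕ) < 2 * n
  · have hne : i ≠ Fin.last (2 * n) := Fin.ne_of_val_ne (by simp; omega)
    simp [projLast, h, Pi.single_eq_of_ne hne]
  · simp [projLast, h]

private lemma single_last_eq_zero {n : ℕ} {l : Fin (2 * n + 1)} (hl : (l : ℕ) < 2 * n) :
    (Pi.single l (1 : ℝ) : Fin (2 * n + 1) → ℝ) (Fin.last (2 * n)) = 0 := by
  apply Pi.single_eq_of_ne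
  exact Fin.ne_of_val_ne (by simp only [Fin.val_last]; omega)

/-- The explicit linear map `S : V → 𝔤` realizing a given alternating bilinear `T`. -/
noncomputable def Smap (n : ℕ)
    (T : (Fin (2 * n + 1) → ℝ) →ₗ[ℝ] (Fin (2 * n + 1) → ℝ) →ₗ[ℝ] (Fin (2 * n + 1) → ℝ)) :
    (Fin (2 * n + 1) → ℝ) →ₗ[ℝ] Matrix (Fin (2 * n + 1)) (Fin (2 * n + 1)) ℝ where
  toFun u := Matrix.of fun i j =>
    if (j : ℕ) < 2 * n then
      (if (i : ℕ) < 2 * n then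
        (T (projLast n u) (Pi.single j 1) i + T (Pi.single i 1) (projLast n u) j
          - (projLast n u) ⬝ᵥ T (Pi.single j 1) (Pi.single i 1)) / 2
      else 0)
    else T (projLast n u) (Pi.single (Fin.last (2 * n)) 1) i
  map_add' u v := by
    funext i j
    by_cases hj : (j : ℕ) < 2 * n
    · by_cases hi : (i : ℕ) < 2 * n
      · simp only [Matrix.of_apply, hj, hi, if_true, map_add, LinearMap.add_apply,
          Pi.add_apply, add_dotProduct, Matrix.add_apply]
        ring
      · simp [hj, hi]
    · simp [hj, map_add]
  map_smul' c u := by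
    funext i j
    by_cases hj : (j : ℕ) < 2 * n
    · by_cases hi : (i : ℕ) < 2 * n
      · simp only [Matrix.of_apply, hj, hi, if_true, _root_.map_smul, LinearMap.smul_apply,
          Pi.smul_apply, smul_dotProduct, Matrix.smul_apply, smul_eq_mul, RingHom.id_apply]
        ring
      · simp [hj, hi]
    · simp [hj, _root_.map_smul]

private lemma Smap_apply (n : ℕ)
    (T : (Fin (2 * n + 1) → ℝ) →ₗ[ℝ] (Fin (2 * n + 1) → ℝ) →ₗ[ℝ] (Fin (2 * n + 1) → ℝ))
    (u : Fin (2 * n + 1) → ℝ) : Smap n T u = Matrix.of fun (i j : Fin (2 * n + 1)) =>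
      if (j : ℕ) < 2 * n then
        (if (i : ℕ) < 2 * n then
          (T (projLast n u) (Pi.single j 1) i + T (Pi.single i 1) (projLast n u) j
            - (projLast n u) ⬝ᵥ T (Pi.single j 1) (Pi.single i 1)) / 2
        else 0)
      else T (projLast n u) (Pi.single (Fin.last (2 * n)) 1) i := rfl

/-- An alternating bilinear map `T : V × V → V`, `V = ℝ^{2n+1}`, lies in the image of
`𝒜 : Hom(V, 𝔤) → Hom(V ∧ V, V)`, `𝒜(S)(u,w) = S(u)w - S(w)u`, if and only if the last
coordinate of `T(u,w)` vanishes whenever `u, w` lie in the span `V'` of the first `2n`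
basis vectors. -/
theorem subRiemann_A_image_iff (n : ℕ) (hn : 1 ≤ n)
    (T : (Fin (2 * n + 1) → ℝ) →ₗ[ℝ] (Fin (2 * n + 1) → ℝ) →ₗ[ℝ] (Fin (2 * n + 1) → ℝ))
    (hT : ∀ u, T u u = 0) :
    (∃ S : (Fin (2 * n + 1) → ℝ) →ₗ[ℝ] Matrix (Fin (2 * n + 1)) (Fin (2 * n + 1)) ℝ,
        (∀ u, memSubRiemannAlg n (S u)) ∧
        ∀ u w, T u w = (S u).mulVec w - (S w).mulVec u) ↔
    (∀ u w : Fin (2 * n + 1) → ℝ,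
        u (Fin.last (2 * n)) = 0 → w (Fin.last (2 * n)) = 0 →
        T u w (Fin.last (2 * n)) = 0) := by
  -- antisymmetry of T
  have hA : ∀ u w, T u w = - T w u := by
    intro u w
    have h := hT (u + w)
    rw [map_add] at h
    simp only [LinearMap.add_apply, map_add, hT u, hT w, zero_add, add_zero] at h
    exact eq_neg_of_add_eq_zero_right h
  have hA' : ∀ u w k, T u w k = - T w u k := by
    intro u w k; rw [hA u w]; simp
  constructor
  · -- forward direction
    rintro ⟨S, hmem, hST⟩ u w hu hw
    rw [hST u w]
    have h1 : (S u).mulVec w (Fin.last (2 * n)) = 0 := by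
      unfold Matrix.mulVec dotProduct
      apply Finset.sum_eq_zero
      intro j _
      rcases fin_lt_or_last j with hj | hj
      · simp [(hmem u).2 j hj]
      · simp [hj, hw]
    have h2 : (S w).mulVec u (Fin.last (2 * n)) = 0 := by
      unfold Matrix.mulVec dotProduct
      apply Finset.sum_eq_zero
      intro j _
      rcases fin_lt_or_last j with hj | hj
      · simp [(hmem w).2 j hj]
      · simp [hj, hu]
    simp [h1, h2]
  · -- converse: explicit construction
    intro hV
    refine ⟨Smap n T, ?_, ?_⟩
    · -- membership in 𝔤
      intro u
      constructor
      · intro i j hi hj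
        simp only [Smap_apply, LinearMap.coe_mk, AddHom.coe_mk, Matrix.of_apply, hi, hj, if_true]
        have e1 : T (projLast n u) (Pi.single j 1) i
            = - T (Pi.single j 1) (projLast n u) i := hA' _ _ _
        have e2 : T (Pi.single i 1) (projLast n u) j
            = - T (projLast n u) (Pi.single i 1) j := hA' _ _ _
        have e3 : (projLast n u) ⬝ᵥ T (Pi.single j 1) (Pi.single i 1)
            = - ((projLast n u) ⬝ᵥ T (Pi.single i 1) (Pi.single j 1)) := by
          rw [hA (Pi.single j 1) (Pi.single i 1), dotProduct_neg]
        rw [e1, e2, e3]; ring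
      · intro j hj
        have hlast : ¬ ((Fin.last (2 * n) : ℕ) < 2 * n) := by simp
        simp [Smap_apply, hj, hlast]
    · -- the identity T u w = S u *ᵥ w - S w *ᵥ u
      set S := Smap n T with hS
      let G : (Fin (2 * n + 1) → ℝ) →ₗ[ℝ] (Fin (2 * n + 1) → ℝ) →ₗ[ℝ] (Fin (2 * n + 1) → ℝ) :=
        LinearMap.mk₂ ℝ (fun u w => (S u).mulVec w - (S w).mulVec u)
          (by intro u₁ u₂ w
              simp only [map_add, Matrix.add_mulVec, Matrix.mulVec_add]
              abel)
          (by intro c u w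
              simp only [_root_.map_smul, Matrix.smul_mulVec, Matrix.mulVec_smul,
                smul_sub])
          (by intro u w₁ w₂
              simp only [map_add, Matrix.add_mulVec, Matrix.mulVec_add]
              abel)
          (by intro c u w
              simp only [_root_.map_smul, Matrix.smul_mulVec, Matrix.mulVec_smul,
                smul_sub])
      have hTG : T = G := by
        apply (Pi.basisFun ℝ (Fin (2 * n + 1))).ext
        intro l
        apply (Pi.basisFun ℝ (Fin (2 * n + 1))).ext
        intro m
        simp only [Pi.basisFun_apply, G, LinearMap.mk₂_apply]
        funext k
        rw [Matrix.mulVec_single_one, Matrix.mulVec_single_one]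
        simp only [Pi.sub_apply, mul_one, Matrix.col_apply]
        have hlastlt : ¬ ((Fin.last (2 * n) : ℕ) < 2 * n) := by simp
        rcases fin_lt_or_last l with hl | hl
        · rcases fin_lt_or_last m with hm | hm
          · -- l, m both in V'
            rcases fin_lt_or_last k with hk | hk
            · simp only [hS, Smap_apply, LinearMap.coe_mk, AddHom.coe_mk, Matrix.of_apply,
                hl, hm, hk, if_true, projLast_single_lt hl, projLast_single_lt hm,
                single_dotProduct, one_mul]
              have e1 : T (Pi.single m 1) (Pi.single l 1) k
                  = - T (Pi.single l 1) (Pi.single m 1) k := hA' _ _ _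
              have e2 : T (Pi.single m 1) (Pi.single k 1) l
                  = - T (Pi.single k 1) (Pi.single m 1) l := hA' _ _ _
              have e3 : T (Pi.single l 1) (Pi.single k 1) m
                  = - T (Pi.single k 1) (Pi.single l 1) m := hA' _ _ _
              rw [e1, e2, e3]; ring
            · -- k is the last index
              subst hk
              simp only [hS, Smap_apply, LinearMap.coe_mk, AddHom.coe_mk, Matrix.of_apply,
                hl, hm, hlastlt, if_true, if_false]
              rw [hV _ _ (single_last_eq_zero hl) (single_last_eq_zero hm)]
              ring
          · -- m is the last index
            subst hm
            simp only [hS, Smap_apply, LinearMap.coe_mk, AddHom.coe_mk, Matrix.of_apply,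
              hl, hlastlt, if_true, if_false, projLast_single_lt hl, projLast_single_last,
              map_zero, LinearMap.zero_apply, Pi.zero_apply, zero_dotProduct, mul_zero,
              sub_zero, zero_div, zero_add, zero_sub, sub_self]
            rcases fin_lt_or_last k with hk | hk
            · simp [hk]
            · simp [hk, hlastlt]
        · subst hl
          rcases fin_lt_or_last m with hm | hm
          · -- l last, m in V'
            simp only [hS, Smap_apply, LinearMap.coe_mk, AddHom.coe_mk, Matrix.of_apply,
              hm, hlastlt, if_true, if_false, projLast_single_lt hm, projLast_single_last,
              map_zero, LinearMap.zero_apply, Pi.zero_apply, zero_dotProduct, mul_zero,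
              sub_zero, zero_div, zero_add, zero_sub]
            by_cases hk : (k : ℕ) < 2 * n
            · simp only [hk, if_true]
              rw [hA' (Pi.single (Fin.last (2 * n)) 1) (Pi.single m 1) k]; ring
            · simp only [hk, if_false]
              rw [hA' (Pi.single (Fin.last (2 * n)) 1) (Pi.single m 1) k]; ring
          · -- both last
            subst hm
            rw [hT]
            simp
      intro u w
      rw [hTG]
      simp [G]
end

section
/- Let n ≥ 1 and let J = fromBlocks 0 (−1) 1 0 be the standard 2n×2n symplectic matrix. If M is an invertible real 2n×2n matrix such that MᵀM = c • 1 for some real number c, and MᵀJM = J, then c = 1; that is, every conformally orthogonal symplectic matrix is orthogonal. -/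
open Matrix

/-- Every conformally orthogonal symplectic matrix is orthogonal: if `M` is invertible
with `MᵀM = c • 1` and `MᵀJM = J` for the standard symplectic matrix
`J = fromBlocks 0 (-1) 1 0`, then `c = 1`. -/
theorem conformal_symplectic_is_orthogonal (n : ℕ) (hn : 1 ≤ n)
    (J M : Matrix (Fin n ⊕ Fin n) (Fin n ⊕ Fin n) ℝ) (c : ℝ)
    (hJ : J = Matrix.fromBlocks 0 (-1) 1 0)
    (hM : IsUnit M)
    (hconf : Mᵀ * M = c • (1 : Matrix (Fin n ⊕ Fin n) (Fin n ⊕ Fin n) ℝ))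
    (hsymp : Mᵀ * J * M = J) :
    c = 1 := by
  haveI : NeZero n := ⟨by omega⟩
  -- J is invertible: J * (-J) = 1
  have hJunit : J * (-J) = 1 := by
    subst hJ
    simp [Matrix.fromBlocks_multiply, Matrix.fromBlocks_neg, ← Matrix.fromBlocks_one]
  have hdetJ : J.det ≠ 0 := by
    intro h
    have := congrArg Matrix.det hJunit
    rw [Matrix.det_mul, h, zero_mul, Matrix.det_one] at this
    norm_num at this
  -- det M ^ 2 = 1
  have hdet1 : M.det ^ 2 = 1 := by
    have := congrArg Matrix.det hsymp
    rw [Matrix.det_mul, Matrix.det_mul, Matrix.det_transpose] at this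
    have h2 : M.det * M.det * J.det = 1 * J.det := by rw [one_mul]; ring_nf; ring_nf at this; linarith
    have := mul_right_cancel₀ hdetJ h2
    rw [pow_two]; linarith [this]
  -- det M ^ 2 = c ^ (2n)
  have hdet2 : M.det ^ 2 = c ^ (2 * n) := by
    have := congrArg Matrix.det hconf
    rw [Matrix.det_mul, Matrix.det_transpose, Matrix.det_smul, Matrix.det_one,
      Fintype.card_sum, Fintype.card_fin] at this
    rw [pow_two, this, mul_one]
    ring_nf
  have hcpow : c ^ (2 * n) = 1 := by rw [← hdet2, hdet1]
  -- c ≥ 0 from diagonal entry of MᵀM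
  have hcnonneg : 0 ≤ c := by
    have := congrFun (congrFun hconf (Sum.inl 0)) (Sum.inl 0)
    rw [Matrix.mul_apply, Matrix.smul_apply, Matrix.one_apply_eq, smul_eq_mul, mul_one] at this
    rw [← this]
    apply Finset.sum_nonneg
    intro k _
    rw [Matrix.transpose_apply]
    exact mul_self_nonneg _
  -- conclude
  have h2n : 2 * n ≠ 0 := by omega
  exact (pow_left_inj₀ hcnonneg zero_le_one h2n).mp (by rw [hcpow, one_pow])
end

section
/- Let n ≥ 1, let V = ℝ^{2n+1} with standard basis e₁,…,e₂ₙ,e₂ₙ₊₁, let V' ⊆ V be the span of e₁,…,e₂ₙ, and let J₀ = fromBlocks 0 (−1) 1 0 be the standard 2n×2n complex structure matrix. Let 𝔲(n) = {A : A is a real 2n×2n matrix with Aᵀ = −A and A J₀ = J₀ A}, and let 𝔤₁ be the space of (2n+1)×(2n+1) real matrices of block form [[A, b],[0, 0]] with A ∈ 𝔲(n) and b ∈ ℝ^{2n}. Then an alternating bilinear map T : V × V → V satisfies T(u,w) = S(u)w − S(w)u for some linear S : V → 𝔤₁ if and only if: (i) T(u, w) ∈ V' for all u, w ∈ V, and (ii)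 the restriction of T to V' × V' equals (u,w) ↦ A(u)w − A(w)u for some linear map A : V' → 𝔲(n). -/
open Matrix

/-- The unitary Lie algebra `𝔲(n)` realized as real `2n×2n` matrices: skew-symmetric
matrices commuting with the standard complex structure `J₀ = fromBlocks 0 (-1) 1 0`. -/
def memUnitaryAlg (n : ℕ) (A : Matrix (Fin n ⊕ Fin n) (Fin n ⊕ Fin n) ℝ) : Prop :=
  Aᵀ = -A ∧
  A * (Matrix.fromBlocks 0 (-1) 1 0) = (Matrix.fromBlocks 0 (-1) 1 0) * A

/-- The Lie algebra `𝔤₁` of the first reduced structure group: `(2n+1)×(2n+1)` real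
matrices of block form `[[A, b], [0, 0]]` with `A ∈ 𝔲(n)` and `b ∈ ℝ^{2n}`.
Here `ℝ^{2n+1}` is indexed by `(Fin n ⊕ Fin n) ⊕ Unit`. -/
def memG1Alg (n : ℕ)
    (M : Matrix ((Fin n ⊕ Fin n) ⊕ Unit) ((Fin n ⊕ Fin n) ⊕ Unit) ℝ) : Prop :=
  memUnitaryAlg n (Matrix.of fun i j => M (Sum.inl i) (Sum.inl j)) ∧
  ∀ j, M (Sum.inr ()) j = 0

/-- An alternating bilinear map `T : V × V → V` on `V = ℝ^{2n+1}` lies in the image of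
`𝒜 : Hom(V, 𝔤₁) → Hom(V ∧ V, V)`, `𝒜(S)(u,w) = S(u)w - S(w)u`, if and only if
(i) `T` takes values in `V'` (the span of the first `2n` basis vectors), and
(ii) the restriction of `T` to `V' × V'` is `(u,w) ↦ A(u)w − A(w)u` for some linear
`A : V' → 𝔲(n)`. -/
theorem G1_A_image_iff (n : ℕ) (hn : 1 ≤ n)
    (T : (((Fin n ⊕ Fin n) ⊕ Unit) → ℝ) →ₗ[ℝ]
         (((Fin n ⊕ Fin n) ⊕ Unit) → ℝ) →ₗ[ℝ] (((Fin n ⊕ Fin n) ⊕ Unit) → ℝ))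
    (hT : ∀ u, T u u = 0) :
    (∃ S : (((Fin n ⊕ Fin n) ⊕ Unit) → ℝ) →ₗ[ℝ]
            Matrix ((Fin n ⊕ Fin n) ⊕ Unit) ((Fin n ⊕ Fin n) ⊕ Unit) ℝ,
        (∀ u, memG1Alg n (S u)) ∧
        ∀ u w, T u w = (S u).mulVec w - (S w).mulVec u) ↔
    ((∀ u w, T u w (Sum.inr ()) = 0) ∧
      ∃ A : ((Fin n ⊕ Fin n) → ℝ) →ₗ[ℝ] Matrix (Fin n ⊕ Fin n) (Fin n ⊕ Fin n) ℝ,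
        (∀ x, memUnitaryAlg n (A x)) ∧
        ∀ x y : (Fin n ⊕ Fin n) → ℝ, ∀ i : Fin n ⊕ Fin n,
          T (Sum.elim x (0 : Unit → ℝ)) (Sum.elim y (0 : Unit → ℝ)) (Sum.inl i) =
            ((A x).mulVec y - (A y).mulVec x) i) := by
  have hskew : ∀ u w, T u w = - T w u := by
    intro u w
    have h := hT (u + w)
    simp only [map_add, LinearMap.add_apply, hT, zero_add, add_zero] at h
    exact eq_neg_of_add_eq_zero_right h
  constructor
  · rintro ⟨S, hS, hTS⟩
    constructor
    · intro u w
      rw [hTS]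
      simp [Matrix.mulVec, dotProduct, (hS u).2, (hS w).2]
    · refine ⟨{ toFun := fun x => Matrix.of fun i j => S (Sum.elim x 0) (Sum.inl i) (Sum.inl j),
                map_add' := ?_, map_smul' := ?_ }, ?_, ?_⟩
      · intro x y
        have : Sum.elim (x + y) (0 : Unit → ℝ) = Sum.elim x 0 + Sum.elim y 0 := by
          funext i; cases i <;> simp
        ext i j
        simp [this]
      · intro c x
        have : Sum.elim (c • x) (0 : Unit → ℝ) = c • Sum.elim x 0 := by
          funext i; cases i <;> simp
        ext i j
        simp [this]
      · intro x
        exact (hS (Sum.elim x 0)).1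
      · intro x y i
        rw [hTS]
        simp [Matrix.mulVec, dotProduct, Fintype.sum_sum_type]
  · rintro ⟨h0, A, hA, hAT⟩
    set e : ((Fin n ⊕ Fin n) ⊕ Unit) → ℝ := Sum.elim 0 1 with he
    refine ⟨⟨⟨fun u => Matrix.of (Sum.elim
          (fun i => Sum.elim (fun j => A (fun k => u (Sum.inl k)) i j)
            (fun _ => - T e (Sum.elim (fun k => u (Sum.inl k)) 0) (Sum.inl i)))
          (fun _ _ => 0)), ?_⟩, ?_⟩, ?_, ?_⟩
    · intro u v
      have h1 : (fun k => (u + v) (Sum.inl k)) = (fun k => u (Sum.inl k)) + (fun k => v (Sum.inl k)) := rfl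
      have h2 : Sum.elim (fun k => (u + v) (Sum.inl k)) (0 : Unit → ℝ)
          = Sum.elim (fun k => u (Sum.inl k)) 0 + Sum.elim (fun k => v (Sum.inl k)) 0 := by
        funext i; cases i <;> simp
      ext i j
      simp only [Matrix.add_apply, Matrix.of_apply]
      cases i with
      | inl i =>
        cases j with
        | inl j => simp only [Sum.elim_inl]; rw [h1, map_add]; rfl
        | inr j => simp only [Sum.elim_inl, Sum.elim_inr]; rw [h2, map_add]; simp; ring
      | inr i => simp
    · intro c u
      have h1 : (fun k => (c • u) (Sum.inl k)) = c • (fun k => u (Sum.inl k)) := rfl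
      have h2 : Sum.elim (fun k => (c • u) (Sum.inl k)) (0 : Unit → ℝ)
          = c • Sum.elim (fun k => u (Sum.inl k)) 0 := by
        funext i; cases i <;> simp
      ext i j
      simp only [Matrix.smul_apply, Matrix.of_apply, smul_eq_mul, RingHom.id_apply]
      cases i with
      | inl i =>
        cases j with
        | inl j => simp only [Sum.elim_inl]; rw [h1, _root_.map_smul]; rfl
        | inr j => simp only [Sum.elim_inl, Sum.elim_inr]; rw [h2, _root_.map_smul]; simp
      | inr i => simp
    · intro u
      constructor
      · convert hA (fun k => u (Sum.inl k)) using 2; rfl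
      · intro j; rfl
    · intro u w
      -- decomposition
      have hdec : ∀ v : ((Fin n ⊕ Fin n) ⊕ Unit) → ℝ,
          v = Sum.elim (fun k => v (Sum.inl k)) 0 + v (Sum.inr ()) • e := by
        intro v; funext i; cases i with
        | inl i => simp [he]
        | inr u => cases u; simp [he]
      have expand : T u w = T (Sum.elim (fun k => u (Sum.inl k)) 0) (Sum.elim (fun k => w (Sum.inl k)) 0)
          + w (Sum.inr ()) • T (Sum.elim (fun k => u (Sum.inl k)) 0) e
          + u (Sum.inr ()) • T e (Sum.elim (fun k => w (Sum.inl k)) 0)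
          + (u (Sum.inr ()) * w (Sum.inr ())) • T e e := by
        conv_lhs => rw [hdec u, hdec w]
        simp only [map_add, _root_.map_smul, LinearMap.add_apply, LinearMap.smul_apply, smul_smul]
        module
      funext i
      cases i with
      | inr i =>
        cases i
        have h0' := h0 u w
        simp [Matrix.mulVec, dotProduct, h0']
      | inl i =>
        rw [expand]
        have hTee : T e e = 0 := hT e
        have hsk : T (Sum.elim (fun k => u (Sum.inl k)) 0) e
            = - T e (Sum.elim (fun k => u (Sum.inl k)) 0) := hskew _ _
        have hrest := hAT (fun k => u (Sum.inl k)) (fun k => w (Sum.inl k)) i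
        simp only [Pi.add_apply, Pi.smul_apply, hTee, Pi.zero_apply, smul_zero, smul_eq_mul,
          hsk, Pi.neg_apply, hrest]
        simp [Matrix.mulVec, dotProduct, Fintype.sum_sum_type]
        ring
end

section
/- Let p, q, r, s be nonzero real numbers with p·r ≠ q·s. Let N be the 4×4 real matrix determined on the standard basis e₁, e₂, e₃, e₄ of ℝ⁴ by N e₁ = (1/r) e₃, N e₂ = (1/s) e₄, N e₃ = −(1/p) e₁, N e₄ = −(1/q) e₂ (all other matrix entries zero). Then for every real number f, the matrix (f • N)² is not equal to −1 (minus the 4×4 identity matrix). -/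
open Matrix

/-- The example of a sub-Riemannian structure with no associated contact metric:
if `p, q, r, s` are nonzero reals with `p*r ≠ q*s` and `N` is the `4×4` matrix with
`N e₁ = (1/r) e₃`, `N e₂ = (1/s) e₄`, `N e₃ = -(1/p) e₁`, `N e₄ = -(1/q) e₂`,
then `(f • N)² ≠ -1` for every real `f`: no rescaling of the operator `φ` is an
almost complex structure. -/
theorem no_almost_complex_rescaling (p q r s : ℝ)
    (hp : p ≠ 0) (hq : q ≠ 0) (hr : r ≠ 0) (hs : s ≠ 0)
    (hprqs : p * r ≠ q * s)
    (N : Matrix (Fin 4) (Fin 4) ℝ)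
    (hN : N = !![0, 0, -(1/p), 0;
                 0, 0, 0, -(1/q);
                 1/r, 0, 0, 0;
                 0, 1/s, 0, 0]) :
    ∀ f : ℝ, (f • N) * (f • N) ≠ -1 := by
  intro f h
  subst hN
  have h00 := congrFun (congrFun h 0) 0
  have h11 := congrFun (congrFun h 1) 1
  simp [Matrix.mul_apply, Fin.sum_univ_four, Matrix.one_apply,
    div_eq_mul_inv] at h00 h11
  -- h00 : f * (p⁻¹) * (f * r⁻¹) = 1 (roughly), h11 similarly with q, s
  apply hprqs
  have hpr : f * f = p * r := by field_simp at h00; linarith [h00]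
  have hqs : f * f = q * s := by field_simp at h11; linarith [h11]
  linarith
end
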